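/- arXiv:2402.09757 — 2 statements merged into one kernel-verified Lean document; each statement's English description precedes it below -/
import Mathlib

section
/- For any k₁, k₂ with 0 ≤ k₁, k₂ ≤ q−1 and any shift 0 < τ < q, the aperiodic cross-correlation sum of the codes ψ(S_{k₁}) and ψ(S_{k₂}) vanishes: Σ_{l=0}^{q−1} Σ_{i=0}^{q−1−τ} S_{k₁,l}(i)·conj(S_{k₂,l}(i+τ)) = 0. -/
open Complex Finset

noncomputable def gfTr (p r : ℕ) [Fact p.Prime] : GaloisField p r → ZMod p :=
  Algebra.trace (ZMod p) (GaloisField p r)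

/-- The additive character `χ_b(c) = exp(2πi·Tr(bc)/p)`. -/
noncomputable def chi (p r : ℕ) [Fact p.Prime] (b c : GaloisField p r) : ℂ :=
  Complex.exp (2 * Real.pi * Complex.I * ((gfTr p r (b * c)).val : ℂ) / p)

/-- `a(0) = 0` and `a(i) = α^{i-1}` for `i ≥ 1`. -/
noncomputable def aMap {p r : ℕ} [Fact p.Prime] (α : GaloisField p r) (i : ℕ) :
    GaloisField p r :=
  if i = 0 then 0 else α ^ (i - 1)

/-- The dot product `k·i` of the base-`p` digit vectors of `k` and `i`. -/
def dotDigits (p r k i : ℕ) : ℕ :=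
  ∑ j ∈ Finset.range r, (k / p ^ j % p) * (i / p ^ j % p)

/-- The sequence entries `S_{k,l}(i) = ω_p^{(k·i) + Tr(a(i)a(l))}`. -/
noncomputable def Skl (p r : ℕ) [Fact p.Prime] (α : GaloisField p r) (k l i : ℕ) : ℂ :=
  Complex.exp (2 * Real.pi * Complex.I / p) ^
    (dotDigits p r k i + (gfTr p r (aMap α i * aMap α l)).val)

section Aux

variable {p r : ℕ} [Fact p.Prime]

lemma aMap_injOn {α : GaloisField p r} (hα : orderOf α = p ^ r - 1) (hr : 0 < r) :
    Set.InjOn (aMap α) (Finset.range (p ^ r) : Set ℕ) := by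
  have hp : p.Prime := Fact.out
  have hq : 2 ≤ p ^ r := by
    calc 2 ≤ p := hp.two_le
    _ = p ^ 1 := (pow_one p).symm
    _ ≤ p ^ r := Nat.pow_le_pow_right hp.pos hr
  have hord : 0 < orderOf α := by omega
  have h1 : α ^ (p ^ r - 1) = 1 := by rw [← hα]; exact pow_orderOf_eq_one α
  have hu : IsUnit α := IsUnit.of_pow_eq_one h1 (by omega)
  have hα0 : α ≠ 0 := hu.ne_zero
  intro x hx y hy hxy
  simp only [coe_range, Set.mem_Iio] at hx hy
  rcases Nat.eq_zero_or_pos x with rfl | hx0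
  · rcases Nat.eq_zero_or_pos y with rfl | hy0
    · rfl
    · exfalso
      simp only [aMap, if_pos rfl, if_neg hy0.ne'] at hxy
      exact pow_ne_zero _ hα0 hxy.symm
  · rcases Nat.eq_zero_or_pos y with rfl | hy0
    · exfalso
      simp only [aMap, if_pos rfl, if_neg hx0.ne'] at hxy
      exact pow_ne_zero _ hα0 hxy
    · simp only [aMap, if_neg hx0.ne', if_neg hy0.ne'] at hxy
      have hux : (hu.unit : GaloisField p r) = α := hu.unit_spec
      have hxy' : hu.unit ^ (x - 1) = hu.unit ^ (y - 1) := by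
        apply Units.ext
        simpa only [Units.val_pow_eq_pow_val, hux] using hxy
      have hordu : orderOf hu.unit = p ^ r - 1 := by
        rw [← hα, ← orderOf_units, hux]
      have := pow_injOn_Iio_orderOf (x := hu.unit)
        (by simp [Set.mem_Iio, hordu]; omega) (by simp [Set.mem_Iio, hordu]; omega) hxy'
      omega

lemma sum_aMap [Fintype (GaloisField p r)] {α : GaloisField p r}
    (hα : orderOf α = p ^ r - 1) (hr : 0 < r)
    (f : GaloisField p r → ℂ) :
    ∑ l ∈ Finset.range (p ^ r), f (aMap α l) = ∑ c, f c := by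
  classical
  have hinj := aMap_injOn hα hr
  have hcard : Fintype.card (GaloisField p r) = p ^ r := by
    rw [← Nat.card_eq_fintype_card]; exact GaloisField.card p r hr.ne'
  have himg : (Finset.range (p ^ r)).image (aMap α) = Finset.univ := by
    apply Finset.eq_univ_of_card
    rw [Finset.card_image_of_injOn hinj, Finset.card_range, hcard]
  rw [← himg, Finset.sum_image (fun x hx y hy h => hinj (by simpa using hx) (by simpa using hy) h)]

end Aux

/-- For any `k₁, k₂` and any shift `0 < τ < q`, the aperiodic cross-correlation sum of the
codes `ψ(S_{k₁})` and `ψ(S_{k₂})` vanishes. -/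
theorem stmt_8 (p r : ℕ) [Fact p.Prime] (hr : 0 < r) (α : GaloisField p r)
    (hα : orderOf α = p ^ r - 1) (k₁ k₂ τ : ℕ) (h₁ : k₁ < p ^ r) (h₂ : k₂ < p ^ r)
    (hτ₀ : 0 < τ) (hτ : τ < p ^ r) :
    ∑ l ∈ Finset.range (p ^ r), ∑ i ∈ Finset.range (p ^ r - τ),
      Skl p r α k₁ l i * (starRingEnd ℂ) (Skl p r α k₂ l (i + τ)) = 0 := by
  classical
  have hp : p.Prime := Fact.out
  haveI : NeZero p := ⟨hp.pos.ne'⟩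
  haveI : Fintype (GaloisField p r) := Fintype.ofFinite _
  set ζ : ℂ := Complex.exp (2 * Real.pi * Complex.I / p) with hζdef
  have hprim : IsPrimitiveRoot ζ p := Complex.isPrimitiveRoot_exp p hp.pos.ne'
  have hζp : ζ ^ p = 1 := hprim.pow_eq_one
  set ψ : AddChar (ZMod p) ℂ := AddChar.zmodChar p hζp with hψdef
  have hψapp : ∀ x : ZMod p, ψ x = ζ ^ x.val := fun x => AddChar.zmodChar_apply hζp x
  -- conj ζ = ζ⁻¹
  have hconjζ : (starRingEnd ℂ) ζ = ζ⁻¹ := by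
    rw [hζdef, ← Complex.exp_conj, ← Complex.exp_neg]
    congr 1
    simp only [map_div₀, map_mul, Complex.conj_I, Complex.conj_ofReal, map_ofNat,
      Complex.conj_natCast]
    ring
  rw [Finset.sum_comm]
  apply Finset.sum_eq_zero
  intro i hi
  simp only [Finset.mem_range] at hi
  -- a(i) ≠ a(i+τ)
  have hne : aMap α i ≠ aMap α (i + τ) := by
    intro h
    have := aMap_injOn hα hr (by simp; omega) (by simp; omega) h
    omega
  set b : GaloisField p r := aMap α i - aMap α (i + τ) with hbdef
  have hb : b ≠ 0 := sub_ne_zero_of_ne hne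
  -- rewrite each term
  have hterm : ∀ l : ℕ,
      Skl p r α k₁ l i * (starRingEnd ℂ) (Skl p r α k₂ l (i + τ)) =
      (ζ ^ dotDigits p r k₁ i * (starRingEnd ℂ) ζ ^ dotDigits p r k₂ (i + τ)) *
        ψ (gfTr p r (b * aMap α l)) := by
    intro l
    have hx : gfTr p r (b * aMap α l) =
        gfTr p r (aMap α i * aMap α l) - gfTr p r (aMap α (i + τ) * aMap α l) := by
      simp only [gfTr, hbdef, sub_mul, map_sub]
    rw [hx, sub_eq_add_neg, AddChar.map_add_eq_mul, AddChar.map_neg_eq_inv,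
      hψapp, hψapp]
    simp only [Skl, ← hζdef, pow_add, map_mul, map_pow, hconjζ, inv_pow]
    ring
  simp only [hterm]
  rw [← Finset.mul_sum]
  have : ∑ l ∈ Finset.range (p ^ r), ψ (gfTr p r (b * aMap α l)) = 0 := by
    rw [sum_aMap hα hr (fun c => ψ (gfTr p r (b * c)))]
    -- this is the sum of a nontrivial additive character over the field
    have htrhom : ∀ x y : GaloisField p r,
        gfTr p r (b * (x + y)) = gfTr p r (b * x) + gfTr p r (b * y) := by
      intro x y; simp only [gfTr, mul_add, map_add]
    let φ : AddChar (GaloisField p r) ℂ :=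
      ψ.compAddMonoidHom
        ((Algebra.trace (ZMod p) (GaloisField p r)).toAddMonoidHom.comp
          (AddMonoidHom.mulLeft b))
    have hφapp : ∀ c, φ c = ψ (gfTr p r (b * c)) := fun c => rfl
    have hφne : φ ≠ 1 := by
      obtain ⟨c, hc⟩ : ∃ c, gfTr p r (b * c) ≠ 0 := by
        have htr := (traceForm_nondegenerate (ZMod p) (GaloisField p r)).1 b
        simp_rw [Algebra.traceForm_apply] at htr
        by_contra! hf
        exact hb (htr hf)
      rw [AddChar.ne_one_iff]
      refine ⟨c, ?_⟩
      rw [hφapp, hψapp]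
      have hval : 0 < (gfTr p r (b * c)).val := by
        rcases Nat.eq_zero_or_pos (gfTr p r (b * c)).val with h | h
        · exact absurd ((ZMod.val_eq_zero _).mp h) hc
        · exact h
      exact hprim.pow_ne_one_of_pos_of_lt hval.ne' (ZMod.val_lt _)
    calc ∑ c, ψ (gfTr p r (b * c)) = ∑ c, φ c := by simp_rw [hφapp]
    _ = 0 := AddChar.sum_eq_zero_of_ne_one hφne
  rw [this, mul_zero]
end

section
/- Let the extended sequences G^c_{k,l} of length q' = nq (with n = Π p_i) be defined by G^c_{k,l}(i') = S_{k,l}(i)·Π_{m=1}^{l} ω_{p_m}^{c_m i_m} where i' = i + i₁q + i₂p₁q + ... + i_l p_{l−1}⋯p₁ q. Then for shift τ = 0 and parameter tuples with (k, c) ≠ (k', c'), the cross-correlation sum Φ(ψ(G^c_k), ψ(G^{c'}_{k'}))(0) = 0. -/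
open Complex Finset

lemma sum_range_mul' (N K : ℕ) (f : ℕ → ℂ) :
    ∑ m ∈ range (N * K), f m = ∑ d ∈ range K, ∑ m ∈ range N, f (m + N * d) := by
  induction K with
  | zero => simp
  | succ K ih =>
      rw [Nat.mul_succ, Finset.sum_range_add, ih, Finset.sum_range_succ]
      congr 1
      exact Finset.sum_congr rfl fun x _ => by ring_nf

lemma conj_exp_inv (m : ℕ) :
    (starRingEnd ℂ) (Complex.exp (2 * Real.pi * Complex.I / m)) =
      (Complex.exp (2 * Real.pi * Complex.I / m))⁻¹ := by
  rw [← Complex.exp_conj, ← Complex.exp_neg]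
  congr 1
  rw [map_div₀, map_mul, map_mul, Complex.conj_I, Complex.conj_ofReal, map_ofNat,
    map_natCast]
  ring

lemma charSum (m : ℕ) (hm : 1 < m) (a b : ℕ) (ha : a < m) (hb : b < m) (hab : a ≠ b) :
    ∑ d ∈ range m, Complex.exp (2 * Real.pi * Complex.I / m) ^ (a * d) *
      ((starRingEnd ℂ) (Complex.exp (2 * Real.pi * Complex.I / m))) ^ (b * d) = 0 := by
  set ζ := Complex.exp (2 * Real.pi * Complex.I / m) with hζ
  have hζ0 : ζ ≠ 0 := Complex.exp_ne_zero _
  have hconj : (starRingEnd ℂ) ζ = ζ⁻¹ := conj_exp_inv m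
  have hprim : IsPrimitiveRoot ζ m := Complex.isPrimitiveRoot_exp m (by omega)
  set u := ζ ^ a * (ζ⁻¹) ^ b with hu
  have hu1 : u ≠ 1 := by
    have huz : u = ζ ^ ((a : ℤ) - b) := by
      rw [hu, zpow_sub₀ hζ0, zpow_natCast, zpow_natCast, div_eq_mul_inv, inv_pow]
    rw [huz, Ne, hprim.zpow_eq_one_iff_dvd]
    intro h
    have h0 : (a:ℤ) - b ≠ 0 := by omega
    have h1 := Int.le_of_dvd (abs_pos.mpr h0) ((dvd_abs _ _).mpr h)
    have h3 : |(a:ℤ)-b| < m := abs_lt.mpr (by omega)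
    exact absurd h3 (not_lt.mpr h1)
  have hum : u ^ m = 1 := by
    rw [hu, mul_pow, ← pow_mul, ← pow_mul, mul_comm a m, mul_comm b m, pow_mul, pow_mul,
      hprim.pow_eq_one, inv_pow, hprim.pow_eq_one, one_pow, inv_one, one_pow, one_mul]
  calc ∑ d ∈ range m, ζ ^ (a * d) * ((starRingEnd ℂ) ζ) ^ (b * d)
      = ∑ d ∈ range m, u ^ d := by
        refine Finset.sum_congr rfl fun d _ => ?_
        rw [hconj, hu, mul_pow, ← pow_mul, ← pow_mul, mul_comm a d, mul_comm b d,
          pow_mul, pow_mul]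
    _ = (u ^ m - 1) / (u - 1) := geom_sum_eq hu1 m
    _ = 0 := by rw [hum, sub_self, zero_div]

lemma mixedRadix (L : ℕ) (P : ℕ → ℕ) (hP : ∀ t, 0 < P t) (h : ℕ → ℕ → ℂ) :
    ∑ m ∈ range (∏ t ∈ range L, P t),
      ∏ t ∈ range L, h t (m / (∏ j ∈ range t, P j) % P t)
    = ∏ t ∈ range L, ∑ d ∈ range (P t), h t d := by
  induction L with
  | zero => simp
  | succ L ih =>
      set N := ∏ t ∈ range L, P t with hN
      have hN0 : 0 < N := Finset.prod_pos fun t _ => hP t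
      rw [Finset.prod_range_succ, sum_range_mul' N (P L)]
      have key : ∀ d ∈ range (P L), ∀ m ∈ range N,
          ∏ t ∈ range (L+1), h t ((m + N * d) / (∏ j ∈ range t, P j) % P t)
          = (∏ t ∈ range L, h t (m / (∏ j ∈ range t, P j) % P t)) * h L d := by
        intro d hd m hm
        rw [Finset.prod_range_succ]
        congr 1
        · refine Finset.prod_congr rfl fun t ht => ?_
          congr 1
          have ht' : t < L := Finset.mem_range.mp ht
          set W := ∏ j ∈ range t, P j with hW
          have hW0 : 0 < W := Finset.prod_pos fun j _ => hP j
          obtain ⟨R, hR⟩ : W * P t ∣ N := by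
            rw [hN, ← Finset.prod_range_succ]
            exact Finset.prod_dvd_prod_of_subset _ _ _
              (Finset.range_subset_range.mpr ht')
          rw [hR]
          rw [show m + W * P t * R * d = m + W * (P t * R * d) by ring,
            Nat.add_mul_div_left _ _ hW0,
            show m / W + P t * R * d = m / W + P t * (R * d) by ring,
            Nat.add_mul_mod_self_left]
        · congr 1
          rw [← hN, Nat.add_mul_div_left _ _ hN0,
            Nat.div_eq_of_lt (Finset.mem_range.mp hm), zero_add,
            Nat.mod_eq_of_lt (Finset.mem_range.mp hd)]
      calc ∑ d ∈ range (P L), ∑ m ∈ range N,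
            ∏ t ∈ range (L+1), h t ((m + N * d) / (∏ j ∈ range t, P j) % P t)
          = ∑ d ∈ range (P L), ∑ m ∈ range N,
            (∏ t ∈ range L, h t (m / (∏ j ∈ range t, P j) % P t)) * h L d := by
            exact Finset.sum_congr rfl fun d hd =>
              Finset.sum_congr rfl fun m hm => key d hd m hm
        _ = (∏ t ∈ range L, ∑ dd ∈ range (P t), h t dd) * ∑ d ∈ range (P L), h L d := by
            rw [← ih, Finset.sum_comm, Finset.sum_mul]
            exact Finset.sum_congr rfl fun m _ => by rw [← Finset.mul_sum]
        _ = _ := by rw [Finset.prod_range_succ]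

lemma digits_ext (p : ℕ) (hp : 1 < p) (r k k' : ℕ) (hk : k < p ^ r) (hk' : k' < p ^ r)
    (h : ∀ j < r, k / p ^ j % p = k' / p ^ j % p) : k = k' := by
  induction r generalizing k k' with
  | zero => simp at hk hk'; omega
  | succ r ih =>
      have h0 := h 0 (Nat.succ_pos r)
      simp only [pow_zero, Nat.div_one] at h0
      have hd : k / p = k' / p := by
        refine ih (k / p) (k' / p) ?_ ?_ ?_
        · rwa [Nat.div_lt_iff_lt_mul (by omega), ← pow_succ]
        · rwa [Nat.div_lt_iff_lt_mul (by omega), ← pow_succ]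
        · intro j hj
          have := h (j+1) (by omega)
          rw [Nat.div_div_eq_div_mul, Nat.div_div_eq_div_mul, mul_comm p (p^j),
            ← pow_succ]
          rwa [pow_succ] at this
      calc k = p * (k / p) + k % p := (Nat.div_add_mod k p).symm
        _ = p * (k' / p) + k' % p := by rw [hd, h0]
        _ = k' := Nat.div_add_mod k' p

/-- The `t`-th mixed-radix digit of the part `i'/q`, with weights `q·∏_{j<t} p_j`. -/
def mixDigit {L : ℕ} (q : ℕ) (P : Fin L → ℕ) (t : Fin L) (i' : ℕ) : ℕ :=
  i' / (q * ∏ j ∈ Finset.Iio t, P j) % P t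

/-- The extended sequence entries
`G^c_{k,l}(i') = S_{k,l}(i) · ∏_m ω_{p_m}^{c_m i_m}` where `i = i' % q`. -/
noncomputable def Gseq (p r : ℕ) [Fact p.Prime] (α : GaloisField p r) {L : ℕ}
    (P : Fin L → ℕ) (c : Fin L → ℕ) (k l i' : ℕ) : ℂ :=
  Skl p r α k l (i' % p ^ r) *
    ∏ t : Fin L,
      Complex.exp (2 * Real.pi * Complex.I / (P t)) ^ (c t * mixDigit (p ^ r) P t i')

/-- For `τ = 0` and distinct parameter tuples `(k,c) ≠ (k',c')`, the cross-correlation sum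
of the extended codes vanishes. -/
theorem stmt_13 (p r : ℕ) [Fact p.Prime] (hr : 0 < r) (α : GaloisField p r)
    (hα : orderOf α = p ^ r - 1) {L : ℕ} (P : Fin L → ℕ) (hP : ∀ t, (P t).Prime)
    (k k' : ℕ) (hk : k < p ^ r) (hk' : k' < p ^ r)
    (c c' : Fin L → ℕ) (hc : ∀ t, c t < P t) (hc' : ∀ t, c' t < P t)
    (hne : (k, c) ≠ (k', c')) :
    ∑ l ∈ Finset.range (p ^ r), ∑ i' ∈ Finset.range ((∏ t : Fin L, P t) * p ^ r),
      Gseq p r α P c k l i' * (starRingEnd ℂ) (Gseq p r α P c' k' l i') = 0 := by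
  classical
  have hp : 1 < p := (Fact.out : p.Prime).one_lt
  have hq0 : 0 < p ^ r := pow_pos (by omega) r
  -- Step 1: reindex i' = i + p^r * d and factor the summand
  have hGir : ∀ l d, ∀ i ∈ range (p ^ r),
      Gseq p r α P c k l (i + p ^ r * d) *
        (starRingEnd ℂ) (Gseq p r α P c' k' l (i + p ^ r * d))
      = (Skl p r α k l i * (starRingEnd ℂ) (Skl p r α k' l i)) *
        ∏ t : Fin L,
          Complex.exp (2 * Real.pi * Complex.I / (P t)) ^
              (c t * (d / (∏ j ∈ Finset.Iio t, P j) % P t)) *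
            ((starRingEnd ℂ) (Complex.exp (2 * Real.pi * Complex.I / (P t)))) ^
              (c' t * (d / (∏ j ∈ Finset.Iio t, P j) % P t)) := by
    intro l d i hi
    have hiq : (i + p ^ r * d) % p ^ r = i := by
      rw [Nat.add_mul_mod_self_left, Nat.mod_eq_of_lt (mem_range.mp hi)]
    have hmix : ∀ t, mixDigit (p ^ r) P t (i + p ^ r * d) =
        d / (∏ j ∈ Finset.Iio t, P j) % P t := by
      intro t
      unfold mixDigit
      rw [← Nat.div_div_eq_div_mul, Nat.add_mul_div_left _ _ hq0,
        Nat.div_eq_of_lt (mem_range.mp hi), zero_add]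
    simp only [Gseq, hiq, hmix, map_mul, map_prod, map_pow]
    rw [mul_mul_mul_comm, ← Finset.prod_mul_distrib]
  -- Step 2: factor the double sum
  have hfac : ∑ l ∈ Finset.range (p ^ r),
      ∑ i' ∈ Finset.range ((∏ t : Fin L, P t) * p ^ r),
      Gseq p r α P c k l i' * (starRingEnd ℂ) (Gseq p r α P c' k' l i')
      = (∑ l ∈ range (p ^ r), ∑ i ∈ range (p ^ r),
          Skl p r α k l i * (starRingEnd ℂ) (Skl p r α k' l i)) *
        ∑ d ∈ range (∏ t : Fin L, P t),
          ∏ t : Fin L,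
            Complex.exp (2 * Real.pi * Complex.I / (P t)) ^
                (c t * (d / (∏ j ∈ Finset.Iio t, P j) % P t)) *
              ((starRingEnd ℂ) (Complex.exp (2 * Real.pi * Complex.I / (P t)))) ^
                (c' t * (d / (∏ j ∈ Finset.Iio t, P j) % P t)) := by
    rw [mul_comm (∏ t : Fin L, P t) (p ^ r), Finset.sum_mul]
    refine Finset.sum_congr rfl fun l _ => ?_
    rw [sum_range_mul']
    calc ∑ d ∈ range (∏ t : Fin L, P t), ∑ i ∈ range (p ^ r),
          Gseq p r α P c k l (i + p ^ r * d) *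
            (starRingEnd ℂ) (Gseq p r α P c' k' l (i + p ^ r * d))
        = ∑ d ∈ range (∏ t : Fin L, P t), ∑ i ∈ range (p ^ r),
            (Skl p r α k l i * (starRingEnd ℂ) (Skl p r α k' l i)) *
            ∏ t : Fin L,
              Complex.exp (2 * Real.pi * Complex.I / (P t)) ^
                  (c t * (d / (∏ j ∈ Finset.Iio t, P j) % P t)) *
                ((starRingEnd ℂ) (Complex.exp (2 * Real.pi * Complex.I / (P t)))) ^
                  (c' t * (d / (∏ j ∈ Finset.Iio t, P j) % P t)) :=
          Finset.sum_congr rfl fun d _ => Finset.sum_congr rfl fun i hi => hGir l d i hi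
      _ = ∑ i ∈ range (p ^ r), ∑ d ∈ range (∏ t : Fin L, P t),
            (Skl p r α k l i * (starRingEnd ℂ) (Skl p r α k' l i)) *
            ∏ t : Fin L,
              Complex.exp (2 * Real.pi * Complex.I / (P t)) ^
                  (c t * (d / (∏ j ∈ Finset.Iio t, P j) % P t)) *
                ((starRingEnd ℂ) (Complex.exp (2 * Real.pi * Complex.I / (P t)))) ^
                  (c' t * (d / (∏ j ∈ Finset.Iio t, P j) % P t)) := Finset.sum_comm
      _ = _ := (Finset.sum_mul_sum _ _ _ _).symm
  rw [hfac]
  by_cases hcc : c = c'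
  · -- k ≠ k' : the base CCC sum vanishes
    have hkk : k ≠ k' := fun hkeq => hne (by rw [hkeq, hcc])
    have hj0 : ∃ j, j < r ∧ k / p ^ j % p ≠ k' / p ^ j % p := by
      by_contra hco
      push_neg at hco
      exact hkk (digits_ext p hp r k k' hk hk' fun j hj => hco j hj)
    obtain ⟨j₀, hj₀r, hj₀⟩ := hj0
    have hA : (∑ l ∈ range (p ^ r), ∑ i ∈ range (p ^ r),
        Skl p r α k l i * (starRingEnd ℂ) (Skl p r α k' l i)) = 0 := by
      have hω0 : Complex.exp (2 * Real.pi * Complex.I / p) ≠ 0 := Complex.exp_ne_zero _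
      have hFi : ∀ l i, Skl p r α k l i * (starRingEnd ℂ) (Skl p r α k' l i)
          = ∏ j ∈ range r,
              (Complex.exp (2 * Real.pi * Complex.I / p) ^
                  ((k / p ^ j % p) * (i / p ^ j % p)) *
                ((starRingEnd ℂ) (Complex.exp (2 * Real.pi * Complex.I / p))) ^
                  ((k' / p ^ j % p) * (i / p ^ j % p))) := by
        intro l i
        simp only [Skl, map_pow, conj_exp_inv, dotDigits]
        rw [pow_add, pow_add, mul_mul_mul_comm, ← mul_pow, mul_inv_cancel₀ hω0,
          one_pow, mul_one, Finset.prod_mul_distrib, Finset.prod_pow_eq_pow_sum,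
          Finset.prod_pow_eq_pow_sum]
      refine Finset.sum_eq_zero fun l _ => ?_
      rw [Finset.sum_congr rfl fun i _ => hFi l i]
      have := mixedRadix r (fun _ => p) (fun _ => Nat.zero_lt_of_lt hp)
        (fun j e => Complex.exp (2 * Real.pi * Complex.I / p) ^ ((k / p ^ j % p) * e) *
          ((starRingEnd ℂ) (Complex.exp (2 * Real.pi * Complex.I / p))) ^
            ((k' / p ^ j % p) * e))
      simp only [Finset.prod_const, Finset.card_range] at this
      rw [this]
      refine Finset.prod_eq_zero (Finset.mem_range.mpr hj₀r) ?_
      exact charSum p hp _ _ (Nat.mod_lt _ (show 0 < p by omega)) (Nat.mod_lt _ (show 0 < p by omega)) hj₀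
    rw [hA, zero_mul]
  · -- c ≠ c' : the mixed-radix phase sum vanishes
    obtain ⟨t₀, ht₀⟩ : ∃ t, c t ≠ c' t := Function.ne_iff.mp hcc
    set P' : ℕ → ℕ := fun j => if hj : j < L then P ⟨j, hj⟩ else 1 with hP'
    set h' : ℕ → ℕ → ℂ := fun j e => if hj : j < L then
        Complex.exp (2 * Real.pi * Complex.I / (P ⟨j, hj⟩)) ^ (c ⟨j, hj⟩ * e) *
          ((starRingEnd ℂ) (Complex.exp (2 * Real.pi * Complex.I / (P ⟨j, hj⟩)))) ^
            (c' ⟨j, hj⟩ * e)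
      else 1 with hh'
    have hWt : ∀ t : Fin L, (∏ j ∈ Finset.Iio t, P j) = ∏ j ∈ range (t : ℕ), P' j := by
      intro t
      refine Finset.prod_bij (fun (a : Fin L) _ => (a : ℕ)) ?_ ?_ ?_ ?_
      · intro a ha
        exact Finset.mem_range.mpr (Fin.lt_def.mp (Finset.mem_Iio.mp ha))
      · intro a _ b _ hab
        exact Fin.val_injective hab
      · intro b hb
        have hbL : b < L := lt_trans (Finset.mem_range.mp hb) t.isLt
        exact ⟨⟨b, hbL⟩, Finset.mem_Iio.mpr (Fin.lt_def.mpr (Finset.mem_range.mp hb)), rfl⟩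
      · intro a _
        simp [hP', a.isLt]
    have hn' : (∏ t : Fin L, P t) = ∏ j ∈ range L, P' j := by
      rw [← Fin.prod_univ_eq_prod_range]
      exact Finset.prod_congr rfl fun t _ => by simp [hP', t.isLt]
    have hB : (∑ d ∈ range (∏ t : Fin L, P t),
        ∏ t : Fin L,
          Complex.exp (2 * Real.pi * Complex.I / (P t)) ^
              (c t * (d / (∏ j ∈ Finset.Iio t, P j) % P t)) *
            ((starRingEnd ℂ) (Complex.exp (2 * Real.pi * Complex.I / (P t)))) ^
              (c' t * (d / (∏ j ∈ Finset.Iio t, P j) % P t))) = 0 := by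
      have hHd : ∀ d, (∏ t : Fin L,
          Complex.exp (2 * Real.pi * Complex.I / (P t)) ^
              (c t * (d / (∏ j ∈ Finset.Iio t, P j) % P t)) *
            ((starRingEnd ℂ) (Complex.exp (2 * Real.pi * Complex.I / (P t)))) ^
              (c' t * (d / (∏ j ∈ Finset.Iio t, P j) % P t)))
          = ∏ j ∈ range L, h' j (d / (∏ j' ∈ range j, P' j') % P' j) := by
        intro d
        rw [← Fin.prod_univ_eq_prod_range]
        refine Finset.prod_congr rfl fun t _ => ?_
        rw [hh']
        simp only [dif_pos t.isLt, Fin.eta, hWt t, hP']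
      rw [Finset.sum_congr rfl fun d _ => hHd d, hn',
        mixedRadix L P' (fun j => by by_cases hj : j < L <;> simp [hP', hj, (hP _).pos]) h']
      refine Finset.prod_eq_zero (Finset.mem_range.mpr t₀.isLt) ?_
      have : ∀ e, h' (t₀ : ℕ) e =
          Complex.exp (2 * Real.pi * Complex.I / (P t₀)) ^ (c t₀ * e) *
            ((starRingEnd ℂ) (Complex.exp (2 * Real.pi * Complex.I / (P t₀)))) ^
              (c' t₀ * e) := by
        intro e
        rw [hh']
        simp [t₀.isLt]
      rw [show P' (t₀ : ℕ) = P t₀ by simp [hP', t₀.isLt],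
        Finset.sum_congr rfl fun e _ => this e]
      exact charSum (P t₀) (hP t₀).one_lt _ _ (hc t₀) (hc' t₀) ht₀
    rw [hB, mul_zero]
end
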